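/- Verification of contract implementation: a system Σ in driving variable form implements a contract C = (A, G) if and only if there exists a linear subspace S ⊆ (X^a × X) × X^g satisfying conditions (12) diag(A∘, A^g) S ⊆ S + im diag(G∘, G^g); (13) (im G∘ ∩ V∘,*) × {0} ⊆ S + ({0} × (im G^g ∩ V^{g,*})); (14) S ⊆ ker H∘ × ker H^g intersected with {((x∘, x^g)) : C∘ x∘ = C^g x^g}; and in addition π_{X^a×X}(S) = V∘,*, where (A∘, G∘, C∘, H∘) realizes A ∘ Σ and V∘,*, V^{g,*} are the consistent subspaces of A ∘ Σ and G. -/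

import Mathlib

/-- A linear system in driving variable form `ẋ = A x + G d`, `w = C x`, `0 = H x`. -/
structure DVSystem (X W D Y : Type)
    [AddCommGroup X] [Module ℝ X] [AddCommGroup W] [Module ℝ W]
    [AddCommGroup D] [Module ℝ D] [AddCommGroup Y] [Module ℝ Y] where
  A : X →ₗ[ℝ] X
  G : D →ₗ[ℝ] X
  C : X →ₗ[ℝ] W
  H : X →ₗ[ℝ] Y

namespace DVSystem

section basic

variable {X W D Y : Type}
  [AddCommGroup X] [Module ℝ X] [AddCommGroup W] [Module ℝ W]
  [AddCommGroup D] [Module ℝ D] [AddCommGroup Y] [Module ℝ Y]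

/-- A subspace `U` is consistent-admissible if `A U ⊆ U + im G` and `U ⊆ ker H`. -/
def Admissible (P : DVSystem X W D Y) (U : Submodule ℝ X) : Prop :=
  U.map P.A ≤ U ⊔ LinearMap.range P.G ∧ U ≤ LinearMap.ker P.H

/-- The consistent subspace `V*`: the largest consistent-admissible subspace. -/
def V (P : DVSystem X W D Y) : Submodule ℝ X :=
  sSup {U | P.Admissible U}

end basic

section sim

variable {W : Type} [AddCommGroup W] [Module ℝ W]
variable {X₁ D₁ Y₁ : Type} [AddCommGroup X₁] [Module ℝ X₁]
  [AddCommGroup D₁] [Module ℝ D₁] [AddCommGroup Y₁] [Module ℝ Y₁]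
variable {X₂ D₂ Y₂ : Type} [AddCommGroup X₂] [Module ℝ X₂]
  [AddCommGroup D₂] [Module ℝ D₂] [AddCommGroup Y₂] [Module ℝ Y₂]

/-- Items (i)-(ii) of the (algebraic) definition of a simulation relation. -/
def SimConds (P₁ : DVSystem X₁ W D₁ Y₁) (P₂ : DVSystem X₂ W D₂ Y₂)
    (S : Submodule ℝ (X₁ × X₂)) : Prop :=
  ∀ x₁ x₂, (x₁, x₂) ∈ S →
    (∀ d₁ : D₁, P₁.A x₁ + P₁.G d₁ ∈ P₁.V →
      ∃ d₂ : D₂, P₂.A x₂ + P₂.G d₂ ∈ P₂.V ∧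
        (P₁.A x₁ + P₁.G d₁, P₂.A x₂ + P₂.G d₂) ∈ S) ∧
    P₁.C x₁ = P₂.C x₂

/-- `S` is a simulation relation of `P₁` by `P₂`. -/
def IsSimRel (P₁ : DVSystem X₁ W D₁ Y₁) (P₂ : DVSystem X₂ W D₂ Y₂)
    (S : Submodule ℝ (X₁ × X₂)) : Prop :=
  S.map (LinearMap.fst ℝ X₁ X₂) ≤ P₁.V ∧ S.map (LinearMap.snd ℝ X₁ X₂) ≤ P₂.V ∧
    SimConds P₁ P₂ S

/-- `S` is a full simulation relation of `P₁` by `P₂`: in addition `π₁(S) = V₁*`. -/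
def IsFullSimRel (P₁ : DVSystem X₁ W D₁ Y₁) (P₂ : DVSystem X₂ W D₂ Y₂)
    (S : Submodule ℝ (X₁ × X₂)) : Prop :=
  IsSimRel P₁ P₂ S ∧ S.map (LinearMap.fst ℝ X₁ X₂) = P₁.V

/-- `P₁ ≼ P₂`: `P₁` is simulated by `P₂`. -/
def Simulates (P₁ : DVSystem X₁ W D₁ Y₁) (P₂ : DVSystem X₂ W D₂ Y₂) : Prop :=
  ∃ S : Submodule ℝ (X₁ × X₂), IsFullSimRel P₁ P₂ S

/-- The composition `P₁ ∘ P₂` obtained by sharing the external variable `w₁ = w₂`. -/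
noncomputable def comp (P₁ : DVSystem X₁ W D₁ Y₁) (P₂ : DVSystem X₂ W D₂ Y₂) :
    DVSystem (X₁ × X₂) W (D₁ × D₂) (Y₁ × Y₂ × W) where
  A := P₁.A.prodMap P₂.A
  G := P₁.G.prodMap P₂.G
  C := (1/2 : ℝ) • (P₁.C ∘ₗ LinearMap.fst ℝ X₁ X₂ + P₂.C ∘ₗ LinearMap.snd ℝ X₁ X₂)
  H := (P₁.H ∘ₗ LinearMap.fst ℝ X₁ X₂).prod
    ((P₂.H ∘ₗ LinearMap.snd ℝ X₁ X₂).prod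
      (P₁.C ∘ₗ LinearMap.fst ℝ X₁ X₂ - P₂.C ∘ₗ LinearMap.snd ℝ X₁ X₂))

end sim

section relcomp

variable {X₁ X₂ X₃ : Type} [AddCommGroup X₁] [Module ℝ X₁]
  [AddCommGroup X₂] [Module ℝ X₂] [AddCommGroup X₃] [Module ℝ X₃]

/-- Composition of linear relations:
`{(x₁, x₃) | ∃ x₂, (x₁, x₂) ∈ S₁₂ ∧ (x₂, x₃) ∈ S₂₃}`. -/
def relComp (S₁₂ : Submodule ℝ (X₁ × X₂)) (S₂₃ : Submodule ℝ (X₂ × X₃)) :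
    Submodule ℝ (X₁ × X₃) where
  carrier := {p | ∃ x₂, (p.1, x₂) ∈ S₁₂ ∧ (x₂, p.2) ∈ S₂₃}
  zero_mem' := ⟨0, S₁₂.zero_mem, S₂₃.zero_mem⟩
  add_mem' := by
    rintro a b ⟨y, hy1, hy2⟩ ⟨z, hz1, hz2⟩
    exact ⟨y + z, S₁₂.add_mem hy1 hz1, S₂₃.add_mem hy2 hz2⟩
  smul_mem' := by
    rintro c a ⟨y, h1, h2⟩
    exact ⟨c • y, S₁₂.smul_mem c h1, S₂₃.smul_mem c h2⟩

/-- The pairing `{(x, (x₁, x₂)) | (x, x₁) ∈ S₁ ∧ (x, x₂) ∈ S₂}` of two relations. -/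
def pairRel (S₁ : Submodule ℝ (X₁ × X₂)) (S₂ : Submodule ℝ (X₁ × X₃)) :
    Submodule ℝ (X₁ × X₂ × X₃) where
  carrier := {p | (p.1, p.2.1) ∈ S₁ ∧ (p.1, p.2.2) ∈ S₂}
  zero_mem' := ⟨S₁.zero_mem, S₂.zero_mem⟩
  add_mem' := by
    rintro a b ⟨ha1, ha2⟩ ⟨hb1, hb2⟩
    exact ⟨S₁.add_mem ha1 hb1, S₂.add_mem ha2 hb2⟩
  smul_mem' := by
    rintro c a ⟨h1, h2⟩
    exact ⟨S₁.smul_mem c h1, S₂.smul_mem c h2⟩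

end relcomp

section contract

variable {W : Type} [AddCommGroup W] [Module ℝ W]
variable {X D Y Xa Da Ya Xg Dg Yg : Type}
  [AddCommGroup X] [Module ℝ X] [AddCommGroup D] [Module ℝ D]
  [AddCommGroup Y] [Module ℝ Y]
  [AddCommGroup Xa] [Module ℝ Xa] [AddCommGroup Da] [Module ℝ Da]
  [AddCommGroup Ya] [Module ℝ Ya]
  [AddCommGroup Xg] [Module ℝ Xg] [AddCommGroup Dg] [Module ℝ Dg]
  [AddCommGroup Yg] [Module ℝ Yg]

/-- `Sys` implements the contract `(Ass, Gar)` if `E ∘ Sys ≼ Gar` for every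
compatible environment `E`, i.e., every environment with `E ≼ Ass`. -/
def Implements (Sys : DVSystem X W D Y)
    (Ass : DVSystem Xa W Da Ya) (Gar : DVSystem Xg W Dg Yg) : Prop :=
  ∀ (Xe De Ye : Type) [AddCommGroup Xe] [Module ℝ Xe] [FiniteDimensional ℝ Xe]
    [AddCommGroup De] [Module ℝ De] [FiniteDimensional ℝ De]
    [AddCommGroup Ye] [Module ℝ Ye] [FiniteDimensional ℝ Ye]
    (E : DVSystem Xe W De Ye),
    Simulates E Ass → Simulates (comp E Sys) Gar

end contract

section refine

variable {W : Type} [AddCommGroup W] [Module ℝ W]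
variable {Xa Da Ya Xg Dg Yg Xa' Da' Ya' Xg' Dg' Yg' : Type}
  [AddCommGroup Xa] [Module ℝ Xa] [AddCommGroup Da] [Module ℝ Da]
  [AddCommGroup Ya] [Module ℝ Ya]
  [AddCommGroup Xg] [Module ℝ Xg] [AddCommGroup Dg] [Module ℝ Dg]
  [AddCommGroup Yg] [Module ℝ Yg]
  [AddCommGroup Xa'] [Module ℝ Xa'] [AddCommGroup Da'] [Module ℝ Da']
  [AddCommGroup Ya'] [Module ℝ Ya']
  [AddCommGroup Xg'] [Module ℝ Xg'] [AddCommGroup Dg'] [Module ℝ Dg']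
  [AddCommGroup Yg'] [Module ℝ Yg']

/-- The contract `(Ass', Gar')` refines the contract `(Ass, Gar)`:
`Ass ≼ Ass'` and `Ass ∘ Gar' ≼ Gar`. -/
def Refines (Ass' : DVSystem Xa' W Da' Ya') (Gar' : DVSystem Xg' W Dg' Yg')
    (Ass : DVSystem Xa W Da Ya) (Gar : DVSystem Xg W Dg Yg) : Prop :=
  Simulates Ass Ass' ∧ Simulates (comp Ass Gar') Gar

end refine

end DVSystem

namespace DVSystem

section myBasic
variable {X W D Y : Type}
  [AddCommGroup X] [Module ℝ X] [AddCommGroup W] [Module ℝ W]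
  [AddCommGroup D] [Module ℝ D] [AddCommGroup Y] [Module ℝ Y]

lemma le_V {P : DVSystem X W D Y} {U : Submodule ℝ X} (h : P.Admissible U) : U ≤ P.V :=
  le_sSup h

lemma admissible_V (P : DVSystem X W D Y) : P.Admissible P.V := by
  constructor
  · rw [V, sSup_eq_iSup', Submodule.map_iSup]
    apply iSup_le
    rintro ⟨U, hU⟩
    refine hU.1.trans (sup_le_sup_right ?_ _)
    rw [← sSup_eq_iSup']
    exact le_sSup hU
  · exact sSup_le fun U hU => hU.2

lemma V_le_ker (P : DVSystem X W D Y) : P.V ≤ LinearMap.ker P.H := (admissible_V P).2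

lemma A_mem_V_sup {P : DVSystem X W D Y} {x : X} (hx : x ∈ P.V) :
    P.A x ∈ P.V ⊔ LinearMap.range P.G :=
  (admissible_V P).1 ⟨x, hx, rfl⟩

end myBasic

section myGeom

variable {W : Type} [AddCommGroup W] [Module ℝ W]
variable {X₁ D₁ Y₁ : Type} [AddCommGroup X₁] [Module ℝ X₁]
  [AddCommGroup D₁] [Module ℝ D₁] [AddCommGroup Y₁] [Module ℝ Y₁]
variable {X₂ D₂ Y₂ : Type} [AddCommGroup X₂] [Module ℝ X₂]
  [AddCommGroup D₂] [Module ℝ D₂] [AddCommGroup Y₂] [Module ℝ Y₂]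

theorem simulates_iff_geom (P₁ : DVSystem X₁ W D₁ Y₁) (P₂ : DVSystem X₂ W D₂ Y₂) :
    Simulates P₁ P₂ ↔ ∃ S : Submodule ℝ (X₁ × X₂),
      S.map (P₁.A.prodMap P₂.A) ≤ S ⊔ LinearMap.range (P₁.G.prodMap P₂.G) ∧
      Submodule.prod (LinearMap.range P₁.G ⊓ P₁.V) (⊥ : Submodule ℝ X₂) ≤
        S ⊔ Submodule.prod (⊥ : Submodule ℝ X₁) (LinearMap.range P₂.G ⊓ P₂.V) ∧
      S ≤ Submodule.prod (LinearMap.ker P₁.H) (LinearMap.ker P₂.H) ⊓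
        LinearMap.ker (P₁.C ∘ₗ LinearMap.fst ℝ X₁ X₂ - P₂.C ∘ₗ LinearMap.snd ℝ X₁ X₂) ∧
      S.map (LinearMap.fst ℝ X₁ X₂) = P₁.V := by
  constructor
  · rintro ⟨S, ⟨⟨h1, h2, hsim⟩, hfull⟩⟩
    refine ⟨S, ?_, ?_, ?_, hfull⟩
    · -- (12)
      rintro z hz
      rw [Submodule.mem_map] at hz
      obtain ⟨⟨x₁, x₂⟩, hxS, rfl⟩ := hz
      have hx₁ : x₁ ∈ P₁.V := h1 ⟨(x₁, x₂), hxS, rfl⟩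
      have h := A_mem_V_sup hx₁
      rw [Submodule.mem_sup] at h
      obtain ⟨v, hv, g, ⟨d, rfl⟩, hsum⟩ := h
      have hstep : P₁.A x₁ + P₁.G (-d) ∈ P₁.V := by
        have : P₁.A x₁ + P₁.G (-d) = v := by rw [map_neg, ← hsum]; abel
        rwa [this]
      obtain ⟨d₂, hd₂V, hd₂S⟩ := (hsim x₁ x₂ hxS).1 (-d) hstep
      rw [Submodule.mem_sup]
      refine ⟨(P₁.A x₁ + P₁.G (-d), P₂.A x₂ + P₂.G d₂), hd₂S,
        (P₁.G.prodMap P₂.G) (d, -d₂), ⟨(d, -d₂), rfl⟩, ?_⟩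
      simp only [LinearMap.prodMap_apply, Prod.mk_add_mk, Prod.mk.injEq, map_neg]
      constructor <;> abel
    · -- (13)
      rintro ⟨g₁, y⟩ ⟨hg, hy⟩
      simp only [Submodule.mem_bot] at hy
      subst hy
      obtain ⟨⟨d₁, rfl⟩, hgV⟩ := hg
      have h0 : P₁.A 0 + P₁.G d₁ ∈ P₁.V := by
        rw [map_zero, zero_add]; exact hgV
      obtain ⟨d₂, hd₂V, hd₂S⟩ := (hsim 0 0 S.zero_mem).1 d₁ h0
      simp only [map_zero, zero_add] at hd₂V hd₂S
      rw [Submodule.mem_sup]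
      refine ⟨(P₁.G d₁, P₂.G d₂), hd₂S, (0, -(P₂.G d₂)), ⟨Submodule.zero_mem _, ?_⟩, ?_⟩
      · exact neg_mem ⟨⟨d₂, rfl⟩, hd₂V⟩
      · simp
    · -- (14)
      rintro ⟨x₁, x₂⟩ hx
      have hx₁ : x₁ ∈ P₁.V := h1 ⟨(x₁, x₂), hx, rfl⟩
      have hx₂ : x₂ ∈ P₂.V := h2 ⟨(x₁, x₂), hx, rfl⟩
      refine ⟨⟨V_le_ker P₁ hx₁, V_le_ker P₂ hx₂⟩, ?_⟩
      rw [SetLike.mem_coe, LinearMap.mem_ker]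
      show P₁.C x₁ - P₂.C x₂ = 0
      rw [(hsim x₁ x₂ hx).2, sub_self]
  · rintro ⟨S, h12, h13, h14, hfull⟩
    have hπ₁ : S.map (LinearMap.fst ℝ X₁ X₂) ≤ P₁.V := hfull.le
    have hC : ∀ x₁ x₂, (x₁, x₂) ∈ S → P₁.C x₁ = P₂.C x₂ := by
      intro x₁ x₂ h
      have := (h14 h).2
      simp only [SetLike.mem_coe, LinearMap.mem_ker, LinearMap.sub_apply, LinearMap.comp_apply,
        LinearMap.fst_apply, LinearMap.snd_apply] at this
      exact sub_eq_zero.mp this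
    have hπ₂ : S.map (LinearMap.snd ℝ X₁ X₂) ≤ P₂.V := by
      apply le_V
      constructor
      · rintro z hz
        simp only [Submodule.mem_map] at hz
        obtain ⟨x₂', ⟨⟨x₁, x₂⟩, hS, rfl⟩, rfl⟩ := hz
        have h := h12 ⟨(x₁, x₂), hS, rfl⟩
        rw [Submodule.mem_sup] at h
        obtain ⟨⟨s₁, s₂⟩, hs, g, ⟨⟨e₁, e₂⟩, rfl⟩, hsum⟩ := h
        have h2 : P₂.A x₂ = s₂ + P₂.G e₂ := by
          have := congrArg Prod.snd hsum
          simpa using this.symm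
        rw [Submodule.mem_sup]
        exact ⟨s₂, ⟨(s₁, s₂), hs, rfl⟩, P₂.G e₂, ⟨e₂, rfl⟩, h2.symm⟩
      · rintro z hz
        rw [Submodule.mem_map] at hz
        obtain ⟨⟨x₁, x₂⟩, hS, rfl⟩ := hz
        exact (h14 hS).1.2
    refine ⟨S, ⟨⟨hπ₁, hπ₂, ?_⟩, hfull⟩⟩
    intro x₁ x₂ hx
    refine ⟨?_, hC x₁ x₂ hx⟩
    intro d₁ hd₁
    have h := h12 ⟨(x₁, x₂), hx, rfl⟩
    rw [Submodule.mem_sup] at h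
    obtain ⟨⟨s₁, s₂⟩, hs, g, ⟨⟨e₁, e₂⟩, rfl⟩, hsum⟩ := h
    have he₁ : P₁.A x₁ = s₁ + P₁.G e₁ := by
      have := congrArg Prod.fst hsum; simpa using this.symm
    have he₂ : P₂.A x₂ = s₂ + P₂.G e₂ := by
      have := congrArg Prod.snd hsum; simpa using this.symm
    have hs₁V : s₁ ∈ P₁.V := hπ₁ ⟨(s₁, s₂), hs, rfl⟩
    have hs₂V : s₂ ∈ P₂.V := hπ₂ ⟨(s₁, s₂), hs, rfl⟩
    have hgmem : (P₁.G (e₁ + d₁), (0 : X₂)) ∈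
        Submodule.prod (LinearMap.range P₁.G ⊓ P₁.V) (⊥ : Submodule ℝ X₂) := by
      refine ⟨⟨⟨e₁ + d₁, rfl⟩, ?_⟩, Submodule.zero_mem _⟩
      have : P₁.G (e₁ + d₁) = (P₁.A x₁ + P₁.G d₁) - s₁ := by rw [he₁, map_add]; abel
      rw [this]
      exact sub_mem hd₁ hs₁V
    have h13' := h13 hgmem
    rw [Submodule.mem_sup] at h13'
    obtain ⟨⟨t₁, t₂⟩, ht, ⟨b₁, b₂⟩, ⟨hb₁, hb₂⟩, hsum2⟩ := h13'
    simp only [Submodule.mem_bot] at hb₁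
    subst hb₁
    obtain ⟨⟨f, hf⟩, hb₂V⟩ := hb₂
    have hf' : P₂.G f = b₂ := hf
    have hb₂V' : b₂ ∈ P₂.V := hb₂V
    have ht₁ : t₁ = P₁.G (e₁ + d₁) := by
      have := congrArg Prod.fst hsum2; simpa using this
    have ht₂ : t₂ = -b₂ := by
      have h' := congrArg Prod.snd hsum2
      simp only [Prod.mk_add_mk] at h'
      exact eq_neg_of_add_eq_zero_left h'
    refine ⟨-(e₂ + f), ?_, ?_⟩
    · have : P₂.A x₂ + P₂.G (-(e₂ + f)) = s₂ - b₂ := by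
        rw [he₂, map_neg, map_add, ← hf']; abel
      rw [this]
      exact sub_mem hs₂V hb₂V'
    · have heq : (P₁.A x₁ + P₁.G d₁, P₂.A x₂ + P₂.G (-(e₂ + f))) = (s₁, s₂) + (t₁, t₂) := by
        rw [ht₁, ht₂, Prod.mk_add_mk, Prod.mk.injEq]
        constructor
        · rw [he₁, map_add]; abel
        · rw [he₂, map_neg, map_add, ← hf']; abel
      rw [heq]
      exact S.add_mem hs ht

end myGeom

section myComp

variable {W : Type} [AddCommGroup W] [Module ℝ W]
variable {X₁ D₁ Y₁ : Type} [AddCommGroup X₁] [Module ℝ X₁]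
  [AddCommGroup D₁] [Module ℝ D₁] [AddCommGroup Y₁] [Module ℝ Y₁]
variable {X₂ D₂ Y₂ : Type} [AddCommGroup X₂] [Module ℝ X₂]
  [AddCommGroup D₂] [Module ℝ D₂] [AddCommGroup Y₂] [Module ℝ Y₂]
variable {X₃ D₃ Y₃ : Type} [AddCommGroup X₃] [Module ℝ X₃]
  [AddCommGroup D₃] [Module ℝ D₃] [AddCommGroup Y₃] [Module ℝ Y₃]

lemma mem_ker_comp_H {P₁ : DVSystem X₁ W D₁ Y₁} {P₂ : DVSystem X₂ W D₂ Y₂} {p : X₁ × X₂} :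
    p ∈ LinearMap.ker (comp P₁ P₂).H ↔
      P₁.H p.1 = 0 ∧ P₂.H p.2 = 0 ∧ P₁.C p.1 = P₂.C p.2 := by
  simp [comp, LinearMap.mem_ker, LinearMap.prod_apply, Prod.ext_iff, sub_eq_zero,
    Prod.mk_eq_zero]

lemma comp_C_apply (P₁ : DVSystem X₁ W D₁ Y₁) (P₂ : DVSystem X₂ W D₂ Y₂) (p : X₁ × X₂) :
    (comp P₁ P₂).C p = (1/2 : ℝ) • (P₁.C p.1 + P₂.C p.2) := rfl

lemma comp_A_apply (P₁ : DVSystem X₁ W D₁ Y₁) (P₂ : DVSystem X₂ W D₂ Y₂) (p : X₁ × X₂) :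
    (comp P₁ P₂).A p = (P₁.A p.1, P₂.A p.2) := rfl

lemma comp_G_apply (P₁ : DVSystem X₁ W D₁ Y₁) (P₂ : DVSystem X₂ W D₂ Y₂) (d : D₁ × D₂) :
    (comp P₁ P₂).G d = (P₁.G d.1, P₂.G d.2) := rfl

lemma comp_V_map_fst_le (P₁ : DVSystem X₁ W D₁ Y₁) (Q : DVSystem X₂ W D₂ Y₂) :
    (comp P₁ Q).V.map (LinearMap.fst ℝ X₁ X₂) ≤ P₁.V := by
  apply le_V
  constructor
  · rintro z hz
    simp only [Submodule.mem_map] at hz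
    obtain ⟨_, ⟨⟨x₁, x⟩, hV, rfl⟩, rfl⟩ := hz
    have h := (admissible_V (comp P₁ Q)).1 ⟨(x₁, x), hV, rfl⟩
    rw [Submodule.mem_sup] at h
    obtain ⟨⟨v₁, v₂⟩, hv, g, ⟨⟨d₁, d⟩, rfl⟩, hsum⟩ := h
    have h1 : P₁.A x₁ = v₁ + P₁.G d₁ := by
      have := congrArg Prod.fst hsum
      simpa [comp_A_apply, comp_G_apply] using this.symm
    rw [Submodule.mem_sup]
    exact ⟨v₁, ⟨(v₁, v₂), hv, rfl⟩, P₁.G d₁, ⟨d₁, rfl⟩, h1.symm⟩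
  · rintro z ⟨⟨x₁, x⟩, hV, rfl⟩
    exact LinearMap.mem_ker.mpr (mem_ker_comp_H.mp (V_le_ker _ hV)).1

lemma simulates_self (P : DVSystem X₁ W D₁ Y₁) : Simulates P P := by
  set S : Submodule ℝ (X₁ × X₁) :=
    Submodule.comap (LinearMap.fst ℝ X₁ X₁) P.V ⊓
      LinearMap.ker (LinearMap.fst ℝ X₁ X₁ - LinearMap.snd ℝ X₁ X₁) with hSdef
  have hmem : ∀ p : X₁ × X₁, p ∈ S ↔ p.1 ∈ P.V ∧ p.1 = p.2 := by
    intro p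
    simp [hSdef, Submodule.mem_inf, Submodule.mem_comap, LinearMap.mem_ker,
      LinearMap.sub_apply, sub_eq_zero]
  refine ⟨S, ⟨⟨?_, ?_, ?_⟩, ?_⟩⟩
  · rintro z ⟨p, hp, rfl⟩
    exact ((hmem p).1 hp).1
  · rintro z ⟨p, hp, rfl⟩
    obtain ⟨h1, h2⟩ := (hmem p).1 hp
    show p.2 ∈ P.V
    rw [← h2]
    exact h1
  · intro x₁ x₂ h
    obtain ⟨hV, heq⟩ := (hmem _).1 h
    simp only at hV heq
    subst heq
    exact ⟨fun d₁ hd₁ => ⟨d₁, hd₁, (hmem _).2 ⟨hd₁, rfl⟩⟩, rfl⟩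
  · apply le_antisymm
    · rintro z ⟨p, hp, rfl⟩
      exact ((hmem p).1 hp).1
    · intro v hv
      exact ⟨(v, v), (hmem _).2 ⟨hv, rfl⟩, rfl⟩

lemma simulates_trans {P₁ : DVSystem X₁ W D₁ Y₁} {P₂ : DVSystem X₂ W D₂ Y₂}
    {P₃ : DVSystem X₃ W D₃ Y₃} (h12 : Simulates P₁ P₂) (h23 : Simulates P₂ P₃) :
    Simulates P₁ P₃ := by
  obtain ⟨S₁₂, ⟨⟨ha1, ha2, hasim⟩, hafull⟩⟩ := h12
  obtain ⟨S₂₃, ⟨⟨hb1, hb2, hbsim⟩, hbfull⟩⟩ := h23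
  refine ⟨relComp S₁₂ S₂₃, ⟨⟨?_, ?_, ?_⟩, ?_⟩⟩
  · rintro z ⟨⟨x₁, x₃⟩, ⟨x₂, hA, hB⟩, rfl⟩
    exact ha1 ⟨(x₁, x₂), hA, rfl⟩
  · rintro z ⟨⟨x₁, x₃⟩, ⟨x₂, hA, hB⟩, rfl⟩
    exact hb2 ⟨(x₂, x₃), hB, rfl⟩
  · rintro x₁ x₃ ⟨x₂, hA, hB⟩
    refine ⟨?_, ((hasim _ _ hA).2).trans ((hbsim _ _ hB).2)⟩
    intro d₁ hd₁
    obtain ⟨d₂, hd₂V, hd₂S⟩ := (hasim _ _ hA).1 d₁ hd₁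
    obtain ⟨d₃, hd₃V, hd₃S⟩ := (hbsim _ _ hB).1 d₂ hd₂V
    exact ⟨d₃, hd₃V, ⟨_, hd₂S, hd₃S⟩⟩
  · apply le_antisymm
    · rintro z ⟨⟨x₁, x₃⟩, ⟨x₂, hA, hB⟩, rfl⟩
      exact ha1 ⟨(x₁, x₂), hA, rfl⟩
    · intro v hv
      rw [← hafull] at hv
      obtain ⟨⟨v', x₂⟩, hA, rfl⟩ := hv
      have hx₂ : x₂ ∈ Submodule.map (LinearMap.fst ℝ X₂ X₃) S₂₃ := by
        rw [hbfull]
        exact ha2 ⟨(v', x₂), hA, rfl⟩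
      obtain ⟨⟨a, x₃⟩, hB, (rfl : a = x₂)⟩ := hx₂
      exact ⟨(v', x₃), ⟨a, hA, hB⟩, rfl⟩

end myComp


section myCompSim

variable {W : Type} [AddCommGroup W] [Module ℝ W]
variable {X₁ D₁ Y₁ : Type} [AddCommGroup X₁] [Module ℝ X₁]
  [AddCommGroup D₁] [Module ℝ D₁] [AddCommGroup Y₁] [Module ℝ Y₁]
variable {X₂ D₂ Y₂ : Type} [AddCommGroup X₂] [Module ℝ X₂]
  [AddCommGroup D₂] [Module ℝ D₂] [AddCommGroup Y₂] [Module ℝ Y₂]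
variable {X D Y : Type} [AddCommGroup X] [Module ℝ X]
  [AddCommGroup D] [Module ℝ D] [AddCommGroup Y] [Module ℝ Y]

/-- Lift of a simulation relation `S ⊆ X₁ × X₂` to the composed systems. -/
def compRel (S : Submodule ℝ (X₁ × X₂)) (V' : Submodule ℝ (X₁ × X)) :
    Submodule ℝ ((X₁ × X) × (X₂ × X)) where
  carrier := {p | (p.1.1, p.2.1) ∈ S ∧ p.2.2 = p.1.2 ∧ p.1 ∈ V'}
  zero_mem' := ⟨S.zero_mem, rfl, V'.zero_mem⟩
  add_mem' := by
    rintro a b ⟨h1, h2, h3⟩ ⟨g1, g2, g3⟩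
    refine ⟨S.add_mem h1 g1, ?_, V'.add_mem h3 g3⟩
    show a.2.2 + b.2.2 = a.1.2 + b.1.2
    rw [h2, g2]
  smul_mem' := by
    rintro c a ⟨h1, h2, h3⟩
    refine ⟨S.smul_mem c h1, ?_, V'.smul_mem c h3⟩
    show c • a.2.2 = c • a.1.2
    rw [h2]

lemma simulates_comp {P₁ : DVSystem X₁ W D₁ Y₁} {P₂ : DVSystem X₂ W D₂ Y₂}
    (Q : DVSystem X W D Y) (h : Simulates P₁ P₂) :
    Simulates (comp P₁ Q) (comp P₂ Q) := by
  obtain ⟨S, ⟨⟨hp1, hp2, hsim⟩, hfull⟩⟩ := h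
  set V₁ := (comp P₁ Q).V with hV₁def
  set S' := compRel (X := X) S V₁ with hS'def
  have hmem : ∀ p : (X₁ × X) × (X₂ × X), p ∈ S' ↔
      (p.1.1, p.2.1) ∈ S ∧ p.2.2 = p.1.2 ∧ p.1 ∈ V₁ := fun p => Iff.rfl
  have hfstV : ∀ {x₁ : X₁} {x : X}, (x₁, x) ∈ V₁ → x₁ ∈ P₁.V := fun h =>
    comp_V_map_fst_le P₁ Q ⟨_, h, rfl⟩
  have hVstep : ∀ {x₁ : X₁} {x : X}, (x₁, x) ∈ V₁ → ∃ (d₁ : D₁) (d : D),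
      (P₁.A x₁ + P₁.G d₁, Q.A x + Q.G d) ∈ V₁ := by
    intro x₁ x hx
    have h := (admissible_V (comp P₁ Q)).1 ⟨(x₁, x), hx, rfl⟩
    rw [Submodule.mem_sup] at h
    obtain ⟨⟨v₁, v⟩, hv, g, ⟨⟨d₁, d⟩, rfl⟩, hsum⟩ := h
    refine ⟨-d₁, -d, ?_⟩
    have heq : (P₁.A x₁ + P₁.G (-d₁), Q.A x + Q.G (-d)) = (v₁, v) := by
      have h1 := congrArg Prod.fst hsum
      have h2 := congrArg Prod.snd hsum
      simp only [comp_A_apply, comp_G_apply, Prod.fst_add, Prod.snd_add] at h1 h2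
      rw [map_neg, map_neg, Prod.mk.injEq]
      constructor
      · rw [← h1]; abel
      · rw [← h2]; abel
    rw [heq]
    exact hv
  -- the second projection of S' is inside the consistent subspace of `comp P₂ Q`
  have hT : S'.map (LinearMap.snd ℝ (X₁ × X) (X₂ × X)) ≤ (comp P₂ Q).V := by
    apply le_V
    constructor
    · rintro z hz
      simp only [Submodule.mem_map] at hz
      obtain ⟨_, ⟨⟨⟨x₁, xt⟩, ⟨x₂, x⟩⟩, hp, rfl⟩, rfl⟩ := hz
      obtain ⟨hS, heq, hV⟩ := (hmem _).1 hp
      simp only at hS heq hV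
      subst heq
      obtain ⟨d₁, d, hw⟩ := hVstep hV
      obtain ⟨d₂, hd₂V, hd₂S⟩ := (hsim x₁ x₂ hS).1 d₁ (hfstV hw)
      have hnew : ((P₁.A x₁ + P₁.G d₁, Q.A x + Q.G d),
          (P₂.A x₂ + P₂.G d₂, Q.A x + Q.G d)) ∈ S' := (hmem _).2 ⟨hd₂S, rfl, hw⟩
      rw [Submodule.mem_sup]
      refine ⟨(P₂.A x₂ + P₂.G d₂, Q.A x + Q.G d), ⟨_, hnew, rfl⟩,
        (comp P₂ Q).G (-d₂, -d), ⟨(-d₂, -d), rfl⟩, ?_⟩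
      simp only [comp_G_apply, comp_A_apply, LinearMap.snd_apply, map_neg,
        Prod.mk_add_mk, Prod.mk.injEq]
      constructor <;> abel
    · rintro z hz
      obtain ⟨⟨⟨x₁, xt⟩, ⟨x₂, x⟩⟩, hp, rfl⟩ := hz
      obtain ⟨hS, heq, hV⟩ := (hmem _).1 hp
      simp only at hS heq hV
      subst heq
      obtain ⟨hH₁, hHx, hC₁⟩ := mem_ker_comp_H.mp (V_le_ker _ hV)
      refine LinearMap.mem_ker.mpr (mem_ker_comp_H.mpr ⟨?_, hHx, ?_⟩)
      · exact LinearMap.mem_ker.mp (V_le_ker P₂ (hp2 ⟨(x₁, x₂), hS, rfl⟩))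
      · show P₂.C x₂ = Q.C x
        rw [← (hsim x₁ x₂ hS).2]
        exact hC₁
  refine ⟨S', ⟨⟨?_, hT, ?_⟩, ?_⟩⟩
  · rintro z ⟨p, hp, rfl⟩
    exact ((hmem p).1 hp).2.2
  · rintro ⟨x₁, xt⟩ ⟨x₂, x⟩ hp
    obtain ⟨hS, heq, hV⟩ := (hmem _).1 hp
    simp only at hS heq hV
    subst heq
    constructor
    · rintro ⟨d₁, d⟩ hd
      have hd' : (P₁.A x₁ + P₁.G d₁, Q.A x + Q.G d) ∈ V₁ := hd
      obtain ⟨d₂, hd₂V, hd₂S⟩ := (hsim x₁ x₂ hS).1 d₁ (hfstV hd')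
      have hnew : ((P₁.A x₁ + P₁.G d₁, Q.A x + Q.G d),
          (P₂.A x₂ + P₂.G d₂, Q.A x + Q.G d)) ∈ S' := (hmem _).2 ⟨hd₂S, rfl, hd'⟩
      exact ⟨(d₂, d), hT ⟨_, hnew, rfl⟩, hnew⟩
    · show (1/2 : ℝ) • (P₁.C x₁ + Q.C x) = (1/2 : ℝ) • (P₂.C x₂ + Q.C x)
      rw [(hsim x₁ x₂ hS).2]
  · apply le_antisymm
    · rintro z ⟨p, hp, rfl⟩
      exact ((hmem p).1 hp).2.2
    · rintro ⟨x₁, x⟩ hv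
      have hx₁ : x₁ ∈ Submodule.map (LinearMap.fst ℝ X₁ X₂) S := by
        rw [hfull]
        exact hfstV hv
      obtain ⟨⟨a, x₂⟩, hS, (rfl : a = x₁)⟩ := hx₁
      exact ⟨((a, x), (x₂, x)), (hmem _).2 ⟨hS, rfl, hv⟩, rfl⟩

end myCompSim


section myMain

variable {W : Type} [AddCommGroup W] [Module ℝ W]
variable {X D Y Xa Da Ya Xg Dg Yg : Type}
  [AddCommGroup X] [Module ℝ X] [AddCommGroup D] [Module ℝ D]
  [AddCommGroup Y] [Module ℝ Y]
  [AddCommGroup Xa] [Module ℝ Xa] [FiniteDimensional ℝ Xa]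
  [AddCommGroup Da] [Module ℝ Da] [FiniteDimensional ℝ Da]
  [AddCommGroup Ya] [Module ℝ Ya] [FiniteDimensional ℝ Ya]
  [AddCommGroup Xg] [Module ℝ Xg] [AddCommGroup Dg] [Module ℝ Dg]
  [AddCommGroup Yg] [Module ℝ Yg]

lemma implements_iff_simulates (Sys : DVSystem X W D Y) (Ass : DVSystem Xa W Da Ya)
    (Gar : DVSystem Xg W Dg Yg) :
    Implements Sys Ass Gar ↔ Simulates (comp Ass Sys) Gar := by
  constructor
  · intro h
    exact h Xa Da Ya Ass (simulates_self Ass)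
  · intro h Xe De Ye _ _ _ _ _ _ _ _ _ E hE
    exact simulates_trans (simulates_comp Sys hE) h

end myMain


end DVSystem

open DVSystem

/-- Verification of contract implementation: `Σ` implements `(Ass, Gar)` iff there is
a subspace `S` satisfying (12), (13), (14) whose first projection is all of `V∘,*`. -/
theorem implements_iff_exists_geometric {W : Type} [AddCommGroup W] [Module ℝ W] [FiniteDimensional ℝ W]
    {X D Y : Type} [AddCommGroup X] [Module ℝ X] [FiniteDimensional ℝ X]
    [AddCommGroup D] [Module ℝ D] [FiniteDimensional ℝ D]
    [AddCommGroup Y] [Module ℝ Y] [FiniteDimensional ℝ Y]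
    {Xa Da Ya : Type} [AddCommGroup Xa] [Module ℝ Xa] [FiniteDimensional ℝ Xa]
    [AddCommGroup Da] [Module ℝ Da] [FiniteDimensional ℝ Da]
    [AddCommGroup Ya] [Module ℝ Ya] [FiniteDimensional ℝ Ya]
    {Xg Dg Yg : Type} [AddCommGroup Xg] [Module ℝ Xg] [FiniteDimensional ℝ Xg]
    [AddCommGroup Dg] [Module ℝ Dg] [FiniteDimensional ℝ Dg]
    [AddCommGroup Yg] [Module ℝ Yg] [FiniteDimensional ℝ Yg]
    (Sys : DVSystem X W D Y) (Ass : DVSystem Xa W Da Ya) (Gar : DVSystem Xg W Dg Yg) :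
    Implements Sys Ass Gar ↔
      ∃ S : Submodule ℝ ((Xa × X) × Xg),
        S.map (((comp Ass Sys).A).prodMap Gar.A) ≤
          S ⊔ LinearMap.range (((comp Ass Sys).G).prodMap Gar.G) ∧
        Submodule.prod (LinearMap.range (comp Ass Sys).G ⊓ (comp Ass Sys).V)
            (⊥ : Submodule ℝ Xg) ≤
          S ⊔ Submodule.prod (⊥ : Submodule ℝ (Xa × X))
            (LinearMap.range Gar.G ⊓ Gar.V) ∧
        S ≤ Submodule.prod (LinearMap.ker (comp Ass Sys).H) (LinearMap.ker Gar.H) ⊓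
          LinearMap.ker ((comp Ass Sys).C ∘ₗ LinearMap.fst ℝ (Xa × X) Xg -
            Gar.C ∘ₗ LinearMap.snd ℝ (Xa × X) Xg) ∧
        S.map (LinearMap.fst ℝ (Xa × X) Xg) = (comp Ass Sys).V := by
  exact (implements_iff_simulates Sys Ass Gar).trans (simulates_iff_geom (comp Ass Sys) Gar)
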